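/- arXiv:2602.11817 — 2 statements merged into one kernel-verified Lean document; each statement's English description precedes it below -/
import Mathlib

section
/- For every t₀ ∈ ℝ and every triple of initial data v₀, v₁, v₂ ∈ H, there exists a unique three times continuously differentiable function w : [t₀, +∞) → H such that w(t₀) = v₀, w′(t₀) = v₁, w″(t₀) = v₂, and w‴(t) + a₂w″(t) + a₁w′(t) + a₀Ψ(w(t)) = 0 for all t ≥ t₀. -/
open scoped RealInnerProductSpace
open Set

private lemma myHasDerivWithinAt_of_nmem_closure {E : Type*} [NormedAddCommGroup E]
    [NormedSpace ℝ E] {f : ℝ → E} {f' : E} {s : Set ℝ} {x : ℝ} (h : x ∉ closure s) :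
    HasDerivWithinAt f f' s x :=
  HasFDerivWithinAt.of_notMem_closure h

private lemma myODE_uniq {E : Type*} [NormedAddCommGroup E] [NormedSpace ℝ E]
    (f : E → E) (K : NNReal) (hf : LipschitzWith K f) {a b : ℝ} {X Y : ℝ → E}
    (hX : ∀ t ∈ Icc a b, HasDerivWithinAt X (f (X t)) (Icc a b) t)
    (hY : ∀ t ∈ Icc a b, HasDerivWithinAt Y (f (Y t)) (Icc a b) t)
    (hab : X a = Y a) : EqOn X Y (Icc a b) := by
  have key : ∀ (Z : ℝ → E), (∀ t ∈ Icc a b, HasDerivWithinAt Z (f (Z t)) (Icc a b) t) →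
      ∀ t ∈ Ico a b, HasDerivWithinAt Z (f (Z t)) (Ici t) t := by
    intro Z hZ t ht
    refine (hZ t (Ico_subset_Icc_self ht)).mono_of_mem_nhdsWithin ?_
    refine Filter.mem_of_superset (Filter.inter_mem self_mem_nhdsWithin
      (mem_nhdsWithin_of_mem_nhds (Iic_mem_nhds ht.2))) ?_
    exact fun u hu => ⟨le_trans ht.1 hu.1, hu.2⟩
  exact ODE_solution_unique (v := fun _ => f) (fun _ => hf)
    (fun t ht => (hX t ht).continuousWithinAt) (key X hX)
    (fun t ht => (hY t ht).continuousWithinAt) (key Y hY) hab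

private lemma myGlobal_sol {E : Type*} [NormedAddCommGroup E] [NormedSpace ℝ E] [CompleteSpace E]
    (f : E → E) (K : ℝ) (hK : 0 ≤ K) (hf : ∀ x y, ‖f x - f y‖ ≤ K * ‖x - y‖)
    (t₀ : ℝ) (x₀ : E) :
    ∃ X : ℝ → E, X t₀ = x₀ ∧ ∀ t ∈ Ici t₀, HasDerivWithinAt X (f (X t)) (Ici t₀) t := by
  set δ : ℝ := 1 / (2 * (K + 1)) with hδdef
  have hδ : 0 < δ := by positivity
  have hδ1 : δ * (2 * (K + 1)) = 1 := by rw [hδdef]; field_simp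
  have hlip : LipschitzWith K.toNNReal f := by
    apply LipschitzWith.of_dist_le_mul
    intro x y
    rw [dist_eq_norm, dist_eq_norm, Real.coe_toNNReal K hK]
    exact hf x y
  -- local solutions with a uniform step δ
  have hloc : ∀ (τ : ℝ) (x : E), ∃ X : ℝ → E, X τ = x ∧
      ∀ t ∈ Icc τ (τ + δ), HasDerivWithinAt X (f (X t)) (Icc τ (τ + δ)) t := by
    intro τ x
    have hR : 0 ≤ 2 * δ * (‖f x‖ + 1) := by positivity
    have hL : 0 ≤ ‖f x‖ + K * (2 * δ * (‖f x‖ + 1)) := by positivity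
    have hpl : IsPicardLindelof (fun _ => f) (tmin := τ) (tmax := τ + δ)
        ⟨τ, le_refl τ, by linarith⟩ x (2 * δ * (‖f x‖ + 1)).toNNReal 0
        (‖f x‖ + K * (2 * δ * (‖f x‖ + 1))).toNNReal K.toNNReal := by
      apply IsPicardLindelof.of_time_independent
      · intro x' hx'
        rw [Real.coe_toNNReal _ hR] at hx'
        rw [Real.coe_toNNReal _ hL]
        have h1 : ‖f x' - f x‖ ≤ K * ‖x' - x‖ := hf x' x
        have h2 : ‖x' - x‖ ≤ 2 * δ * (‖f x‖ + 1) := by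
          rw [← dist_eq_norm]; exact Metric.mem_closedBall.mp hx'
        have h3 : ‖f x'‖ ≤ ‖f x' - f x‖ + ‖f x‖ := by
          calc ‖f x'‖ = ‖(f x' - f x) + f x‖ := by congr 1; abel
          _ ≤ _ := norm_add_le _ _
        have h4 := mul_le_mul_of_nonneg_left h2 hK
        linarith
      · exact hlip.lipschitzOnWith
      · simp only [NNReal.coe_zero, sub_zero, tsub_zero, Real.coe_toNNReal _ hR,
          Real.coe_toNNReal _ hL]
        have hmax : max (τ + δ - τ) (τ - τ) = δ := by
          rw [show τ + δ - τ = δ by ring, show τ - τ = 0 by ring, max_eq_left hδ.le]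
        rw [hmax]
        have hN : 0 ≤ ‖f x‖ := norm_nonneg _
        nlinarith [sq_nonneg δ, mul_nonneg hδ.le hN]
    obtain ⟨X, hX0, hX⟩ := hpl.exists_eq_forall_mem_Icc_hasDerivWithinAt₀
    exact ⟨X, hX0, hX⟩
  -- solutions on [t₀, t₀ + (n+1)δ] by induction
  have hseq : ∀ n : ℕ, ∃ X : ℝ → E, X t₀ = x₀ ∧
      ∀ t ∈ Icc t₀ (t₀ + (n + 1) * δ),
        HasDerivWithinAt X (f (X t)) (Icc t₀ (t₀ + (n + 1) * δ)) t := by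
    intro n
    induction n with
    | zero =>
      obtain ⟨X, h1, h2⟩ := hloc t₀ x₀
      refine ⟨X, h1, ?_⟩
      have : t₀ + ((0 : ℕ) + 1) * δ = t₀ + δ := by push_cast; ring
      rw [this]; exact h2
    | succ n ih =>
      obtain ⟨X₁, hX₁0, hX₁⟩ := ih
      set b := t₀ + (n + 1) * δ with hbdef
      obtain ⟨X₂, hX₂0, hX₂⟩ := hloc b (X₁ b)
      have htb : t₀ ≤ b := by
        have : (0 : ℝ) ≤ (n + 1) * δ := by positivity
        linarith
      have hbb : b ≤ b + δ := by linarith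
      have hend : t₀ + (((n + 1 : ℕ) : ℝ) + 1) * δ = b + δ := by push_cast; rw [hbdef]; ring
      set Y : ℝ → E := fun t => if t ≤ b then X₁ t else X₂ t with hYdef
      have hY1 : ∀ u ∈ Icc t₀ b, Y u = X₁ u := fun u hu => if_pos hu.2
      have hY2 : ∀ u, b ≤ u → Y u = X₂ u := by
        intro u hu
        by_cases h' : u ≤ b
        · have : u = b := le_antisymm h' hu
          rw [hYdef]; simp only [this, if_pos le_rfl, hX₂0]
        · exact if_neg h'
      refine ⟨Y, ?_, ?_⟩
      · rw [hY1 t₀ ⟨le_rfl, htb⟩, hX₁0]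
      · intro t ht
        have ht' : t ∈ Icc t₀ (b + δ) := by rwa [hend] at ht
        have hunion : Icc t₀ b ∪ Icc b (b + δ) = Icc t₀ (b + δ) :=
          Icc_union_Icc_eq_Icc htb hbb
        have key1 : HasDerivWithinAt Y (f (Y t)) (Icc t₀ b) t := by
          by_cases hti : t ≤ b
          · have ht1 : t ∈ Icc t₀ b := ⟨ht'.1, hti⟩
            rw [hY1 t ht1]
            exact (hX₁ t ht1).congr hY1 (hY1 t ht1)
          · apply myHasDerivWithinAt_of_nmem_closure
            rw [isClosed_Icc.closure_eq]
            exact fun hc => hti hc.2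
        have key2 : HasDerivWithinAt Y (f (Y t)) (Icc b (b + δ)) t := by
          by_cases hti : b ≤ t
          · have ht2 : t ∈ Icc b (b + δ) := ⟨hti, ht'.2⟩
            rw [hY2 t hti]
            exact (hX₂ t ht2).congr (fun u hu => hY2 u hu.1) (hY2 t hti)
          · apply myHasDerivWithinAt_of_nmem_closure
            rw [isClosed_Icc.closure_eq]
            exact fun hc => hti hc.1
        have := key1.union key2
        rw [hunion] at this
        rw [hend]
        exact this
  choose X hX0 hX using hseq
  -- coherence
  have hcoh : ∀ n m : ℕ, n ≤ m → EqOn (X n) (X m) (Icc t₀ (t₀ + (n + 1) * δ)) := by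
    intro n m hnm
    have hbb : t₀ + ((n : ℝ) + 1) * δ ≤ t₀ + ((m : ℝ) + 1) * δ := by
      have : ((n : ℝ) + 1) ≤ (m : ℝ) + 1 := by
        have := (Nat.cast_le (α := ℝ)).mpr hnm
        linarith
      nlinarith
    exact myODE_uniq f K.toNNReal hlip (hX n)
      (fun t ht => (hX m t (Icc_subset_Icc_right hbb ht)).mono (Icc_subset_Icc_right hbb))
      ((hX0 n).trans (hX0 m).symm)
  set N : ℝ → ℕ := fun t => ⌈(t - t₀) / δ⌉₊ with hNdef
  have hNt : ∀ t, t < t₀ + (N t + 1) * δ := by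
    intro t
    have h1 : (t - t₀) / δ ≤ N t := Nat.le_ceil _
    have h2 : t - t₀ ≤ (N t : ℝ) * δ := by
      rw [div_le_iff₀ hδ] at h1
      exact h1
    nlinarith
  set Xg : ℝ → E := fun t => X (N t) t with hXgdef
  have hXg_eq : ∀ n : ℕ, EqOn Xg (X n) (Icc t₀ (t₀ + (n + 1) * δ)) := by
    intro n u hu
    have h1 : u ∈ Icc t₀ (t₀ + ((N u : ℝ) + 1) * δ) := ⟨hu.1, (hNt u).le⟩
    rcases le_total (N u) n with hle | hle
    · exact hcoh (N u) n hle h1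
    · exact (hcoh n (N u) hle hu).symm
  refine ⟨Xg, hX0 _, ?_⟩
  intro t ht
  have h1 : t ∈ Icc t₀ (t₀ + ((N t : ℝ) + 1) * δ) := ⟨ht, (hNt t).le⟩
  have h2 := (hX (N t) t h1).congr (fun u hu => hXg_eq (N t) hu) (hXg_eq (N t) h1)
  rw [← hXg_eq (N t) h1] at h2
  refine h2.mono_of_mem_nhdsWithin ?_
  refine Filter.mem_of_superset (Filter.inter_mem self_mem_nhdsWithin
    (mem_nhdsWithin_of_mem_nhds (Iic_mem_nhds (hNt t)))) ?_
  exact fun u hu => ⟨hu.1, hu.2⟩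
theorem stmt_5
    {H : Type*} [NormedAddCommGroup H] [InnerProductSpace ℝ H] [CompleteSpace H]
    (Ω : Set H) (hΩne : Ω.Nonempty) (hΩcl : IsClosed Ω) (hΩcv : Convex ℝ Ω)
    (γ : ℝ) (hγ : 0 < γ)
    (h : H → ℝ) (hconv : ConvexOn ℝ Ω h) (hlsc : LowerSemicontinuousOn h Ω)
    (P : H → H)
    (hP : ∀ u : H, P u ∈ Ω ∧ ∀ v ∈ Ω, ⟪P u - u, v - P u⟫ + γ * h v - γ * h (P u) ≥ 0)
    (F g : H → H) (η β : ℝ) (hη : 0 ≤ η) (hβ : 0 ≤ β)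
    (hF : ∀ u v : H, ‖F u - F v‖ ≤ η * ‖u - v‖)
    (hg : ∀ u v : H, ‖g u - g v‖ ≤ β * ‖u - v‖)
    (Ψ : H → H) (hΨ : ∀ u : H, Ψ u = F u - P (F u - γ • g u))
    (a₀ a₁ a₂ : ℝ) (ha₀ : 0 < a₀) (ha₁ : 0 < a₁) (ha₂ : 0 < a₂)
    (t₀ : ℝ) (v₀ v₁ v₂ : H) :
    (∃ w : ℝ → H, (fun (w : ℝ → H) =>
      ContDiffOn ℝ 3 w (Set.Ici t₀) ∧
      w t₀ = v₀ ∧ derivWithin w (Set.Ici t₀) t₀ = v₁ ∧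
      derivWithin (derivWithin w (Set.Ici t₀)) (Set.Ici t₀) t₀ = v₂ ∧
      ∀ t ∈ Set.Ici t₀,
        derivWithin (derivWithin (derivWithin w (Set.Ici t₀)) (Set.Ici t₀)) (Set.Ici t₀) t
          + a₂ • derivWithin (derivWithin w (Set.Ici t₀)) (Set.Ici t₀) t
          + a₁ • derivWithin w (Set.Ici t₀) t + a₀ • Ψ (w t) = 0) w) ∧
    (∀ w w' : ℝ → H, (fun (w : ℝ → H) =>
      ContDiffOn ℝ 3 w (Set.Ici t₀) ∧
      w t₀ = v₀ ∧ derivWithin w (Set.Ici t₀) t₀ = v₁ ∧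
      derivWithin (derivWithin w (Set.Ici t₀)) (Set.Ici t₀) t₀ = v₂ ∧
      ∀ t ∈ Set.Ici t₀,
        derivWithin (derivWithin (derivWithin w (Set.Ici t₀)) (Set.Ici t₀)) (Set.Ici t₀) t
          + a₂ • derivWithin (derivWithin w (Set.Ici t₀)) (Set.Ici t₀) t
          + a₁ • derivWithin w (Set.Ici t₀) t + a₀ • Ψ (w t) = 0) w → (fun (w : ℝ → H) =>
      ContDiffOn ℝ 3 w (Set.Ici t₀) ∧
      w t₀ = v₀ ∧ derivWithin w (Set.Ici t₀) t₀ = v₁ ∧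
      derivWithin (derivWithin w (Set.Ici t₀)) (Set.Ici t₀) t₀ = v₂ ∧
      ∀ t ∈ Set.Ici t₀,
        derivWithin (derivWithin (derivWithin w (Set.Ici t₀)) (Set.Ici t₀)) (Set.Ici t₀) t
          + a₂ • derivWithin (derivWithin w (Set.Ici t₀)) (Set.Ici t₀) t
          + a₁ • derivWithin w (Set.Ici t₀) t + a₀ • Ψ (w t) = 0) w' →
      Set.EqOn w w' (Set.Ici t₀)) := by
  classical
  -- P is nonexpansive
  have hPlip : ∀ u v : H, ‖P u - P v‖ ≤ ‖u - v‖ := by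
    intro u v
    set A := P u
    set B := P v
    have h1 := (hP u).2 B (hP v).1
    have h2 := (hP v).2 A (hP u).1
    have e1 : ⟪A - u, B - A⟫ = -⟪A - u, A - B⟫ := by
      rw [show B - A = -(A - B) by abel, inner_neg_right]
    have e2 : ⟪B - v, A - B⟫ - ⟪A - u, A - B⟫ = ⟪u - v, A - B⟫ - ⟪A - B, A - B⟫ := by
      rw [← inner_sub_left, ← inner_sub_left, show B - v - (A - u) = u - v - (A - B) by abel]
    have key : ⟪A - B, A - B⟫ ≤ ⟪u - v, A - B⟫ := by linarith
    have h4 : ‖A - B‖ * ‖A - B‖ ≤ ‖u - v‖ * ‖A - B‖ := by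
      have h5 := real_inner_le_norm (u - v) (A - B)
      rw [real_inner_self_eq_norm_mul_norm] at key
      linarith
    rcases eq_or_lt_of_le (norm_nonneg (A - B)) with h0 | h0
    · rw [← h0]; exact norm_nonneg _
    · exact le_of_mul_le_mul_right h4 h0
  -- Ψ is Lipschitz
  set c : ℝ := 2 * η + γ * β with hcdef
  have hΨlip : ∀ u v : H, ‖Ψ u - Ψ v‖ ≤ c * ‖u - v‖ := by
    intro u v
    rw [hΨ u, hΨ v]
    have h1 : ‖F u - P (F u - γ • g u) - (F v - P (F v - γ • g v))‖ ≤
        ‖F u - F v‖ + ‖P (F u - γ • g u) - P (F v - γ • g v)‖ := by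
      calc _ = ‖(F u - F v) + -(P (F u - γ • g u) - P (F v - γ • g v))‖ := by congr 1; abel
      _ ≤ _ := by rw [← norm_neg (P (F u - γ • g u) - P (F v - γ • g v))] ; exact norm_add_le _ _
    have h2 : ‖P (F u - γ • g u) - P (F v - γ • g v)‖ ≤ ‖(F u - γ • g u) - (F v - γ • g v)‖ :=
      hPlip _ _
    have h3 : ‖(F u - γ • g u) - (F v - γ • g v)‖ ≤ ‖F u - F v‖ + γ * ‖g u - g v‖ := by
      calc ‖(F u - γ • g u) - (F v - γ • g v)‖ = ‖(F u - F v) + -(γ • (g u - g v))‖ := by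
            congr 1; rw [smul_sub]; abel
      _ ≤ ‖F u - F v‖ + ‖γ • (g u - g v)‖ := by
            rw [← norm_neg (γ • (g u - g v))]; exact norm_add_le _ _
      _ = ‖F u - F v‖ + γ * ‖g u - g v‖ := by
            rw [norm_smul, Real.norm_eq_abs, abs_of_pos hγ]
    have h4 := hF u v
    have h5 := hg u v
    have h6 := mul_le_mul_of_nonneg_left h5 hγ.le
    rw [hcdef]
    nlinarith [norm_nonneg (u - v)]
  have hc : 0 ≤ c := by rw [hcdef]; positivity
  -- the first-order vector field
  set vf : (H × H × H) → (H × H × H) :=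
    fun p => (p.2.1, p.2.2, -(a₂ • p.2.2 + a₁ • p.2.1 + a₀ • Ψ p.1)) with hvfdef
  set K : ℝ := 1 + a₁ + a₂ + a₀ * c with hKdef
  have hK0 : 0 ≤ K := by rw [hKdef]; positivity
  have hvf : ∀ p q : H × H × H, ‖vf p - vf q‖ ≤ K * ‖p - q‖ := by
    intro p q
    have h1 : ‖p.1 - q.1‖ ≤ ‖p - q‖ := norm_fst_le (p - q)
    have h2 : ‖p.2.1 - q.2.1‖ ≤ ‖p - q‖ := (norm_fst_le ((p - q).2)).trans (norm_snd_le (p - q))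
    have h3 : ‖p.2.2 - q.2.2‖ ≤ ‖p - q‖ := (norm_snd_le ((p - q).2)).trans (norm_snd_le (p - q))
    have hT : ‖-(a₂ • p.2.2 + a₁ • p.2.1 + a₀ • Ψ p.1) -
        -(a₂ • q.2.2 + a₁ • q.2.1 + a₀ • Ψ q.1)‖ ≤ (a₂ + a₁ + a₀ * c) * ‖p - q‖ := by
      have e : -(a₂ • p.2.2 + a₁ • p.2.1 + a₀ • Ψ p.1) -
          -(a₂ • q.2.2 + a₁ • q.2.1 + a₀ • Ψ q.1)
          = a₂ • (q.2.2 - p.2.2) + (a₁ • (q.2.1 - p.2.1) + a₀ • (Ψ q.1 - Ψ p.1)) := by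
        rw [smul_sub, smul_sub, smul_sub]; abel
      rw [e]
      have n1 : ‖a₂ • (q.2.2 - p.2.2)‖ = a₂ * ‖q.2.2 - p.2.2‖ := by
        rw [norm_smul, Real.norm_eq_abs, abs_of_pos ha₂]
      have n2 : ‖a₁ • (q.2.1 - p.2.1)‖ = a₁ * ‖q.2.1 - p.2.1‖ := by
        rw [norm_smul, Real.norm_eq_abs, abs_of_pos ha₁]
      have n3 : ‖a₀ • (Ψ q.1 - Ψ p.1)‖ = a₀ * ‖Ψ q.1 - Ψ p.1‖ := by
        rw [norm_smul, Real.norm_eq_abs, abs_of_pos ha₀]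
      have hb := norm_add_le (a₂ • (q.2.2 - p.2.2)) (a₁ • (q.2.1 - p.2.1) + a₀ • (Ψ q.1 - Ψ p.1))
      have hb2 := norm_add_le (a₁ • (q.2.1 - p.2.1)) (a₀ • (Ψ q.1 - Ψ p.1))
      have hΨb := hΨlip q.1 p.1
      rw [norm_sub_rev] at h1 h2 h3
      have m1 := mul_le_mul_of_nonneg_left h3 ha₂.le
      have m2 := mul_le_mul_of_nonneg_left h2 ha₁.le
      have m3 : a₀ * ‖Ψ q.1 - Ψ p.1‖ ≤ a₀ * (c * ‖q.1 - p.1‖) :=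
        mul_le_mul_of_nonneg_left hΨb ha₀.le
      have m4 : a₀ * (c * ‖q.1 - p.1‖) ≤ a₀ * (c * ‖p - q‖) := by
        have := mul_le_mul_of_nonneg_left h1 hc
        exact mul_le_mul_of_nonneg_left this ha₀.le
      rw [n1] at hb
      rw [n2, n3] at hb2
      nlinarith [norm_nonneg (p - q)]
    have hnorm : ‖vf p - vf q‖ = max ‖p.2.1 - q.2.1‖ (max ‖p.2.2 - q.2.2‖
        ‖-(a₂ • p.2.2 + a₁ • p.2.1 + a₀ • Ψ p.1) - -(a₂ • q.2.2 + a₁ • q.2.1 + a₀ • Ψ q.1)‖) := by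
      rw [Prod.norm_def, Prod.norm_def]
      rfl
    rw [hnorm]
    have hK1 : 1 ≤ K := by rw [hKdef]; nlinarith [mul_nonneg ha₀.le hc]
    have hKb : ‖p - q‖ ≤ K * ‖p - q‖ := le_mul_of_one_le_left (norm_nonneg _) hK1
    refine max_le (h2.trans hKb) (max_le (h3.trans hKb) (hT.trans ?_))
    have : (a₂ + a₁ + a₀ * c) * ‖p - q‖ ≤ K * ‖p - q‖ := by
      rw [hKdef]; nlinarith [norm_nonneg (p - q)]
    exact this
  have hΨcont : Continuous Ψ := by
    have : LipschitzWith c.toNNReal Ψ := by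
      apply LipschitzWith.of_dist_le_mul
      intro x y
      rw [dist_eq_norm, dist_eq_norm, Real.coe_toNNReal c hc]
      exact hΨlip x y
    exact this.continuous
  have hvflip : LipschitzWith K.toNNReal vf := by
    apply LipschitzWith.of_dist_le_mul
    intro x y
    rw [dist_eq_norm, dist_eq_norm, Real.coe_toNNReal K hK0]
    exact hvf x y
  set s : Set ℝ := Set.Ici t₀ with hsdef
  have hs : UniqueDiffOn ℝ s := uniqueDiffOn_Ici t₀
  constructor
  · -- EXISTENCE
    obtain ⟨X, hX0, hX⟩ := myGlobal_sol vf K hK0 hvf t₀ (v₀, v₁, v₂)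
    set w : ℝ → H := fun t => (X t).1 with hwdef
    set y : ℝ → H := fun t => (X t).2.1 with hydef
    set z : ℝ → H := fun t => (X t).2.2 with hzdef
    have hw' : ∀ t ∈ s, HasDerivWithinAt w (y t) s t := by
      intro t ht
      exact (ContinuousLinearMap.fst ℝ H (H × H)).hasFDerivAt.comp_hasDerivWithinAt t (hX t ht)
    have hy' : ∀ t ∈ s, HasDerivWithinAt y (z t) s t := by
      intro t ht
      exact ((ContinuousLinearMap.fst ℝ H H).comp
        (ContinuousLinearMap.snd ℝ H (H × H))).hasFDerivAt.comp_hasDerivWithinAt t (hX t ht)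
    have hz' : ∀ t ∈ s, HasDerivWithinAt z (-(a₂ • z t + a₁ • y t + a₀ • Ψ (w t))) s t := by
      intro t ht
      exact ((ContinuousLinearMap.snd ℝ H H).comp
        (ContinuousLinearMap.snd ℝ H (H × H))).hasFDerivAt.comp_hasDerivWithinAt t (hX t ht)
    have hdw : ∀ t ∈ s, derivWithin w s t = y t :=
      fun t ht => (hw' t ht).derivWithin (hs.uniqueDiffWithinAt ht)
    have hdy : ∀ t ∈ s, derivWithin y s t = z t :=
      fun t ht => (hy' t ht).derivWithin (hs.uniqueDiffWithinAt ht)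
    have hdz : ∀ t ∈ s, derivWithin z s t = -(a₂ • z t + a₁ • y t + a₀ • Ψ (w t)) :=
      fun t ht => (hz' t ht).derivWithin (hs.uniqueDiffWithinAt ht)
    have hd2 : ∀ t ∈ s, derivWithin (derivWithin w s) s t = z t := by
      intro t ht
      rw [derivWithin_congr hdw (hdw t ht)]
      exact hdy t ht
    have hd3 : ∀ t ∈ s, derivWithin (derivWithin (derivWithin w s) s) s t
        = -(a₂ • z t + a₁ • y t + a₀ • Ψ (w t)) := by
      intro t ht
      rw [derivWithin_congr hd2 (hd2 t ht)]
      exact hdz t ht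
    -- continuity
    have hwc : ContinuousOn w s := fun t ht => (hw' t ht).continuousWithinAt
    have hyc : ContinuousOn y s := fun t ht => (hy' t ht).continuousWithinAt
    have hzc : ContinuousOn z s := fun t ht => (hz' t ht).continuousWithinAt
    have hg3 : ContinuousOn (fun t => -(a₂ • z t + a₁ • y t + a₀ • Ψ (w t))) s :=
      (((hzc.const_smul a₂).add (hyc.const_smul a₁)).add
        ((hΨcont.comp_continuousOn hwc).const_smul a₀)).neg
    have cd1 : ContDiffOn ℝ 1 z s := by
      rw [show (1 : WithTop ℕ∞) = 0 + 1 from (zero_add 1).symm,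
        contDiffOn_succ_iff_derivWithin hs]
      refine ⟨fun t ht => (hz' t ht).differentiableWithinAt, by simp, ?_⟩
      rw [contDiffOn_zero]
      exact hg3.congr hdz
    have cd2 : ContDiffOn ℝ 2 y s := by
      rw [show (2 : WithTop ℕ∞) = 1 + 1 from one_add_one_eq_two.symm,
        contDiffOn_succ_iff_derivWithin hs]
      exact ⟨fun t ht => (hy' t ht).differentiableWithinAt, by simp, cd1.congr hdy⟩
    have cd3 : ContDiffOn ℝ 3 w s := by
      rw [show (3 : WithTop ℕ∞) = 2 + 1 from two_add_one_eq_three.symm,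
        contDiffOn_succ_iff_derivWithin hs]
      exact ⟨fun t ht => (hw' t ht).differentiableWithinAt, by simp, cd2.congr hdw⟩
    have ht₀s : t₀ ∈ s := self_mem_Ici
    refine ⟨w, cd3, ?_, ?_, ?_, ?_⟩
    · rw [hwdef]; simp [hX0]
    · rw [hdw t₀ ht₀s, hydef]; simp [hX0]
    · rw [hd2 t₀ ht₀s, hzdef]; simp [hX0]
    · intro t ht
      rw [hd3 t ht, hd2 t ht, hdw t ht]
      abel
  · -- UNIQUENESS
    intro w w' hw hw'
    have build : ∀ (u : ℝ → H), (ContDiffOn ℝ 3 u s ∧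
        u t₀ = v₀ ∧ derivWithin u s t₀ = v₁ ∧
        derivWithin (derivWithin u s) s t₀ = v₂ ∧
        ∀ t ∈ s,
          derivWithin (derivWithin (derivWithin u s) s) s t
            + a₂ • derivWithin (derivWithin u s) s t
            + a₁ • derivWithin u s t + a₀ • Ψ (u t) = 0) →
        (fun t => (u t, derivWithin u s t, derivWithin (derivWithin u s) s t)) t₀
          = (v₀, v₁, v₂) ∧
        ∀ t ∈ s, HasDerivWithinAt
          (fun t => (u t, derivWithin u s t, derivWithin (derivWithin u s) s t))
          (vf ((fun t => (u t, derivWithin u s t, derivWithin (derivWithin u s) s t)) t)) s t := by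
      intro u hu
      obtain ⟨hcd, hu0, hu1, hu2, hode⟩ := hu
      rw [show (3 : WithTop ℕ∞) = 2 + 1 from two_add_one_eq_three.symm,
        contDiffOn_succ_iff_derivWithin hs] at hcd
      obtain ⟨hdiff1, -, hcd2⟩ := hcd
      rw [show (2 : WithTop ℕ∞) = 1 + 1 from one_add_one_eq_two.symm,
        contDiffOn_succ_iff_derivWithin hs] at hcd2
      obtain ⟨hdiff2, -, hcd1⟩ := hcd2
      rw [show (1 : WithTop ℕ∞) = 0 + 1 from (zero_add 1).symm,
        contDiffOn_succ_iff_derivWithin hs] at hcd1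
      obtain ⟨hdiff3, -, -⟩ := hcd1
      constructor
      · simp [hu0, hu1, hu2]
      · intro t ht
        have hd3 : derivWithin (derivWithin (derivWithin u s) s) s t
            = -(a₂ • derivWithin (derivWithin u s) s t
              + a₁ • derivWithin u s t + a₀ • Ψ (u t)) := by
          have h4 := hode t ht
          apply eq_neg_of_add_eq_zero_left
          rw [← h4]; abel
        have hW := ((hdiff1 t ht).hasDerivWithinAt.prodMk
          (((hdiff2 t ht).hasDerivWithinAt).prodMk ((hdiff3 t ht).hasDerivWithinAt)))
        rw [hd3] at hW
        exact hW
    obtain ⟨hW0, hWd⟩ := build w hw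
    obtain ⟨hW0', hWd'⟩ := build w' hw'
    intro t ht
    have hsub : Icc t₀ t ⊆ s := Icc_subset_Ici_self
    have hEq := myODE_uniq vf K.toNNReal hvflip
      (fun τ hτ => (hWd τ (hsub hτ)).mono hsub)
      (fun τ hτ => (hWd' τ (hsub hτ)).mono hsub)
      (hW0.trans hW0'.symm) (right_mem_Icc.mpr ht)
    exact congrArg Prod.fst hEq
end

section
/- Let H be a real Hilbert space, a₁, a₂ ∈ ℝ, and w : ℕ → H. Define the forward difference w^Δ(k) := w(k+1) − w(k) and iterates w^{Δ^{p+1}} := (w^{Δ^p})^Δ, and set y_p(k) := ‖w^{Δ^p}(k)‖². Then for every k ∈ ℕ: ‖w^{Δ³}(k) + a₂w^{Δ²}(k) + a₁w^Δ(k)‖² = a₁ y₁^{Δ²}(k) + a₂a₁ y₁^Δ(k) + a₁² y₁(k) + (a₂ − 2a₁) y₂^Δ(k) + (a₂² − 2a₁ − a₂a₁) y₂(k) + (1 − a₂ + a₁) y₃(k). -/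
/-- Forward difference operator on sequences. -/
def fdiff {G : Type*} [AddGroup G] (z : ℕ → G) : ℕ → G :=
  fun k => z (k + 1) - z k

theorem stmt_17 {H : Type*} [NormedAddCommGroup H] [InnerProductSpace ℝ H]
    (a₁ a₂ : ℝ) (w : ℕ → H) :
    ∀ k : ℕ,
      ‖fdiff (fdiff (fdiff w)) k + a₂ • fdiff (fdiff w) k + a₁ • fdiff w k‖ ^ 2 =
        a₁ * fdiff (fdiff (fun j => ‖fdiff w j‖ ^ 2)) k
        + a₂ * a₁ * fdiff (fun j => ‖fdiff w j‖ ^ 2) k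
        + a₁ ^ 2 * ‖fdiff w k‖ ^ 2
        + (a₂ - 2 * a₁) * fdiff (fun j => ‖fdiff (fdiff w) j‖ ^ 2) k
        + (a₂ ^ 2 - 2 * a₁ - a₂ * a₁) * ‖fdiff (fdiff w) k‖ ^ 2
        + (1 - a₂ + a₁) * ‖fdiff (fdiff (fdiff w)) k‖ ^ 2 := by
  intro k
  simp only [fdiff, ← real_inner_self_eq_norm_sq]
  simp only [inner_sub_left, inner_sub_right, inner_add_left, inner_add_right,
    real_inner_smul_left, real_inner_smul_right, smul_sub, smul_add]
  rw [real_inner_comm (w (k+1)) (w k), real_inner_comm (w (k+1+1)) (w k),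
    real_inner_comm (w (k+1+1+1)) (w k), real_inner_comm (w (k+1+1)) (w (k+1)),
    real_inner_comm (w (k+1+1+1)) (w (k+1)), real_inner_comm (w (k+1+1+1)) (w (k+1+1))]
  ring
end
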